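/- arXiv:2510.18755 — 4 statements merged into one kernel-verified Lean document; each statement's English description precedes it below -/
import Mathlib

section
/- For a continuous real-valued function φ on an interval I ⊂ ℝ₊, the λ-jump counting function N_λ(φ) — the supremum of J ∈ ℕ such that there exist points t₁ < t₂ < ⋯ < t_J in I with |φ(t_i) − φ(t_{i−1})| > λ for i = 2,…,J — satisfies the quasi-subadditivity property N_λ(φ + ψ; I) ≤ 2 (N_{λ/4}(φ; I) + N_{λ/4}(ψ; I)) for all continuous φ, ψ on I and all λ > 0. -/
open Set

/-- The `λ`-jump counting function of `φ` on `I`: the supremum of the number `J` of points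
`t₁ < t₂ < ⋯ < t_J` in `I` such that consecutive increments of `φ` exceed `λ`. -/
noncomputable def jumpCount (φ : ℝ → ℝ) (I : Set ℝ) (lam : ℝ) : ℕ∞ :=
  sSup {N : ℕ∞ | ∃ J : ℕ, N = (J : ℕ∞) ∧ ∃ t : ℕ → ℝ,
    (∀ i < J, t i ∈ I) ∧ (∀ i, i + 1 < J → t i < t (i + 1)) ∧
    (∀ i, i + 1 < J → lam < |φ (t (i + 1)) - φ (t i)|)}

private lemma jc_mono_aux {t : ℕ → ℝ} {J : ℕ} (h : ∀ i, i + 1 < J → t i < t (i + 1)) :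
    ∀ j, ∀ i, i ≤ j → j < J → t i ≤ t j := by
  intro j
  induction j with
  | zero => intro i hi _; interval_cases i; exact le_refl _
  | succ j ih =>
    intro i hi hJ
    rcases Nat.lt_or_ge i (j + 1) with h1 | h1
    · exact le_trans (ih i (Nat.lt_succ_iff.mp h1) (Nat.lt_of_succ_lt hJ)) (le_of_lt (h j hJ))
    · have : i = j + 1 := le_antisymm hi h1
      subst this; exact le_refl _

/-- From `K ≥ 1` "pairs" with big `φ`-jumps we can build a list of points with
consecutive `lam/4`-jumps of length at least `K + 1`, ending at the last right endpoint. -/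
private lemma jc_build (φ : ℝ → ℝ) (I : Set ℝ) (lam : ℝ) (hlam : 0 < lam) :
    ∀ K : ℕ, 1 ≤ K → ∀ a b : ℕ → ℝ,
      (∀ k < K, a k ∈ I) → (∀ k < K, b k ∈ I) → (∀ k < K, a k < b k) →
      (∀ k, k + 1 < K → b k ≤ a (k + 1)) →
      (∀ k < K, lam / 2 < |φ (b k) - φ (a k)|) →
      ∃ l : List ℝ, (∀ x ∈ l, x ∈ I) ∧ l.Chain' (· < ·) ∧
        l.Chain' (fun x y => lam / 4 < |φ y - φ x|) ∧
        K + 1 ≤ l.length ∧ l.getLast? = some (b (K - 1)) := by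
  intro K
  induction K with
  | zero => intro h; exact absurd h (by norm_num)
  | succ K ih =>
    intro _ a b haI hbI hab hba hjump
    rcases Nat.eq_zero_or_pos K with hK0 | hK1
    · subst hK0
      refine ⟨[a 0, b 0], ?_, ?_, ?_, by simp, by simp⟩
      · intro x hx
        simp only [List.mem_cons, List.mem_singleton, List.not_mem_nil, or_false] at hx
        rcases hx with rfl | rfl
        · exact haI 0 one_pos
        · exact hbI 0 one_pos
      · simp [List.Chain', hab 0 one_pos]
      · simp only [List.Chain', List.isChain_cons_cons, List.isChain_singleton, and_true]
        exact lt_trans (by linarith) (hjump 0 one_pos)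
    · obtain ⟨l, hlI, hlmono, hljump, hllen, hllast⟩ :=
        ih hK1 a b (fun k hk => haI k (Nat.lt_succ_of_lt hk))
          (fun k hk => hbI k (Nat.lt_succ_of_lt hk))
          (fun k hk => hab k (Nat.lt_succ_of_lt hk))
          (fun k hk => hba k (Nat.lt_succ_of_lt hk))
          (fun k hk => hjump k (Nat.lt_succ_of_lt hk))
      have hlast_le : b (K - 1) ≤ a K := by
        have := hba (K - 1) (by omega)
        rwa [Nat.sub_add_cancel hK1] at this
      have haK : a K ∈ I := haI K (Nat.lt_succ_self K)
      have hbK : b K ∈ I := hbI K (Nat.lt_succ_self K)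
      have habK : a K < b K := hab K (Nat.lt_succ_self K)
      have hjK : lam / 2 < |φ (b K) - φ (a K)| := hjump K (Nat.lt_succ_self K)
      by_cases hcase : lam / 4 < |φ (a K) - φ (b (K - 1))|
      -- case 1: append both a K and b K
      · have hstrict : b (K - 1) < a K := by
          rcases lt_or_eq_of_le hlast_le with h | h
          · exact h
          · exfalso; rw [h] at hcase; simp at hcase; linarith
        refine ⟨l ++ [a K, b K], ?_, ?_, ?_, ?_, ?_⟩
        · intro x hx
          rcases List.mem_append.mp hx with h | h
          · exact hlI x h
          · simp only [List.mem_cons, List.mem_singleton, List.not_mem_nil, or_false] at h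
            rcases h with rfl | rfl
            · exact haK
            · exact hbK
        · simp only [List.Chain', List.isChain_append]
          refine ⟨hlmono, by simp [habK], ?_⟩
          intro x hx y hy
          rw [hllast] at hx
          simp only [Option.mem_def, Option.some.injEq] at hx
          simp only [List.head?_cons, Option.mem_def, Option.some.injEq] at hy
          subst hx; subst hy; exact hstrict
        · simp only [List.Chain', List.isChain_append]
          refine ⟨hljump, ?_, ?_⟩
          · simp only [List.Chain', List.isChain_cons_cons, List.isChain_singleton, and_true]
            exact lt_trans (by linarith) hjK
          · intro x hx y hy
            rw [hllast] at hx
            simp only [Option.mem_def, Option.some.injEq] at hx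
            simp only [List.head?_cons, Option.mem_def, Option.some.injEq] at hy
            subst hx; subst hy; exact hcase
        · rw [List.length_append]; simp only [List.length_cons, List.length_singleton]
          omega
        · rw [List.getLast?_append]; simp
      -- case 2: append only b K
      · push_neg at hcase
        have hjump2 : lam / 4 < |φ (b K) - φ (b (K - 1))| := by
          have h1 : |φ (b K) - φ (a K)| - |φ (a K) - φ (b (K - 1))| ≤
              |φ (b K) - φ (b (K - 1))| := by
            have := abs_sub_abs_le_abs_sub (φ (b K) - φ (a K)) (φ (b (K-1)) - φ (a K))
            have h2 : φ (b K) - φ (a K) - (φ (b (K-1)) - φ (a K)) = φ (b K) - φ (b (K-1)) := by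
              ring
            rw [h2] at this
            have h3 : |φ (b (K-1)) - φ (a K)| = |φ (a K) - φ (b (K-1))| := abs_sub_comm _ _
            linarith
          linarith
        refine ⟨l ++ [b K], ?_, ?_, ?_, ?_, ?_⟩
        · intro x hx
          rcases List.mem_append.mp hx with h | h
          · exact hlI x h
          · simp only [List.mem_singleton] at h; subst h; exact hbK
        · simp only [List.Chain', List.isChain_append]
          refine ⟨hlmono, by simp, ?_⟩
          intro x hx y hy
          rw [hllast] at hx
          simp only [Option.mem_def, Option.some.injEq] at hx
          simp only [List.head?_cons, Option.mem_def, Option.some.injEq] at hy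
          subst hx; subst hy
          exact lt_of_le_of_lt hlast_le habK
        · simp only [List.Chain', List.isChain_append]
          refine ⟨hljump, by simp, ?_⟩
          intro x hx y hy
          rw [hllast] at hx
          simp only [Option.mem_def, Option.some.injEq] at hx
          simp only [List.head?_cons, Option.mem_def, Option.some.injEq] at hy
          subst hx; subst hy; exact hjump2
        · rw [List.length_append]; simp only [List.length_singleton]; omega
        · rw [List.getLast?_append]; simp

/-- A list witness gives membership of its length in the defining set of `jumpCount`. -/
private lemma jc_list_mem (φ : ℝ → ℝ) (I : Set ℝ) (mu : ℝ) (l : List ℝ)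
    (hlI : ∀ x ∈ l, x ∈ I) (hmono : l.Chain' (· < ·))
    (hjump : l.Chain' (fun x y => mu < |φ y - φ x|)) :
    ((l.length : ℕ∞)) ≤ jumpCount φ I mu := by
  apply le_sSup
  refine ⟨l.length, rfl, fun i => l.getD i 0, ?_, ?_, ?_⟩
  · intro i hi
    show l.getD i 0 ∈ I
    rw [List.getD_eq_getElem l 0 hi]
    exact hlI _ (l.getElem_mem hi)
  · intro i hi
    show l.getD i 0 < l.getD (i + 1) 0
    rw [List.getD_eq_getElem l 0 (show i < l.length by omega), List.getD_eq_getElem l 0 hi]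
    have := List.isChain_iff_getElem.mp hmono i (by omega)
    simpa using this
  · intro i hi
    show mu < |φ (l.getD (i + 1) 0) - φ (l.getD i 0)|
    rw [List.getD_eq_getElem l 0 (show i < l.length by omega), List.getD_eq_getElem l 0 hi]
    have := List.isChain_iff_getElem.mp hjump i (by omega)
    simpa using this

/-- Key counting lemma: a set `S` of gaps of a monotone sequence in `I` with
`lam/2`-jumps of `φ` forces `jumpCount φ I (lam/4) ≥ S.card + 1`. -/
private lemma jc_card (φ : ℝ → ℝ) (I : Set ℝ) (lam : ℝ) (hlam : 0 < lam)
    (J : ℕ) (hJ : 1 ≤ J) (t : ℕ → ℝ) (htI : ∀ i < J, t i ∈ I)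
    (htmono : ∀ i, i + 1 < J → t i < t (i + 1))
    (S : Finset ℕ) (hS : ∀ i ∈ S, i + 1 < J ∧ lam / 2 < |φ (t (i + 1)) - φ (t i)|) :
    (S.card : ℕ∞) + 1 ≤ jumpCount φ I (lam / 4) := by
  rcases Nat.eq_zero_or_pos S.card with hc0 | hc1
  · rw [hc0]
    have : ((([t 0].length : ℕ) : ℕ∞)) ≤ jumpCount φ I (lam / 4) := by
      apply jc_list_mem
      · intro x hx; simp only [List.mem_singleton] at hx; subst hx; exact htI 0 hJ
      · simp [List.Chain']
      · simp [List.Chain']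
    simpa using this
  · set K := S.card with hK
    have e := S.orderEmbOfFin (k := K) rfl
    set f : ℕ → ℕ := fun k => if h : k < K then S.orderEmbOfFin rfl ⟨k, h⟩ else 0 with hf
    have hfS : ∀ k < K, f k ∈ S := by
      intro k hk; simp only [hf, dif_pos hk]; exact S.orderEmbOfFin_mem rfl ⟨k, hk⟩
    have hfmono : ∀ k, k + 1 < K → f k < f (k + 1) := by
      intro k hk
      simp only [hf, dif_pos hk, dif_pos (Nat.lt_of_succ_lt hk)]
      exact (S.orderEmbOfFin rfl).strictMono (by simp [Fin.lt_def])
    have hgap : ∀ k < K, f k + 1 < J := fun k hk => (hS _ (hfS k hk)).1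
    obtain ⟨l, hlI, hlmono, hljump, hllen, _⟩ :=
      jc_build φ I lam hlam K hc1 (fun k => t (f k)) (fun k => t (f k + 1))
        (fun k hk => htI _ (Nat.lt_of_succ_lt (hgap k hk)))
        (fun k hk => htI _ (hgap k hk))
        (fun k hk => htmono _ (hgap k hk))
        (fun k hk => by
          have h1 : f k + 1 ≤ f (k + 1) := hfmono k hk
          exact jc_mono_aux htmono (f (k + 1)) (f k + 1) h1
            (Nat.lt_of_succ_lt (hgap (k + 1) hk)))
        (fun k hk => (hS _ (hfS k hk)).2)
    calc (K : ℕ∞) + 1 ≤ (l.length : ℕ∞) := by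
          have : ((K + 1 : ℕ) : ℕ∞) ≤ (l.length : ℕ∞) := Nat.cast_le.mpr hllen
          simpa using this
      _ ≤ jumpCount φ I (lam / 4) := jc_list_mem φ I (lam / 4) l hlI hlmono hljump

theorem jumpCount_quasi_subadd
    (I : Set ℝ) (hI : I.OrdConnected) (hIpos : I ⊆ Set.Ioi (0 : ℝ))
    (φ ψ : ℝ → ℝ) (hφ : ContinuousOn φ I) (hψ : ContinuousOn ψ I)
    (lam : ℝ) (hlam : 0 < lam) :
    jumpCount (φ + ψ) I lam ≤
      2 * (jumpCount φ I (lam / 4) + jumpCount ψ I (lam / 4)) := by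
  apply sSup_le
  rintro N ⟨J, rfl, t, htI, htmono, htjump⟩
  rcases Nat.eq_zero_or_pos J with hJ0 | hJ1
  · subst hJ0; simp
  set Sφ : Finset ℕ := (Finset.range (J - 1)).filter
    (fun i => lam / 2 < |φ (t (i + 1)) - φ (t i)|) with hSφ
  set Sψ : Finset ℕ := (Finset.range (J - 1)).filter
    (fun i => lam / 2 < |ψ (t (i + 1)) - ψ (t i)|) with hSψ
  have hcover : Finset.range (J - 1) ⊆ Sφ ∪ Sψ := by
    intro i hi
    have hi1 : i + 1 < J := by
      have := Finset.mem_range.mp hi; omega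
    have hj := htjump i hi1
    have hsum : |(φ + ψ) (t (i + 1)) - (φ + ψ) (t i)| ≤
        |φ (t (i + 1)) - φ (t i)| + |ψ (t (i + 1)) - ψ (t i)| := by
      simp only [Pi.add_apply]
      have : φ (t (i+1)) + ψ (t (i+1)) - (φ (t i) + ψ (t i)) =
          (φ (t (i+1)) - φ (t i)) + (ψ (t (i+1)) - ψ (t i)) := by ring
      rw [this]
      exact abs_add_le _ _
    have : lam / 2 < |φ (t (i + 1)) - φ (t i)| ∨
        lam / 2 < |ψ (t (i + 1)) - ψ (t i)| := by
      by_contra h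
      push_neg at h
      linarith
    rcases this with h | h
    · exact Finset.mem_union_left _ (Finset.mem_filter.mpr ⟨hi, h⟩)
    · exact Finset.mem_union_right _ (Finset.mem_filter.mpr ⟨hi, h⟩)
  have hcard : J - 1 ≤ Sφ.card + Sψ.card := by
    calc J - 1 = (Finset.range (J - 1)).card := (Finset.card_range _).symm
      _ ≤ (Sφ ∪ Sψ).card := Finset.card_le_card hcover
      _ ≤ Sφ.card + Sψ.card := Finset.card_union_le _ _
  have hφ' : (Sφ.card : ℕ∞) + 1 ≤ jumpCount φ I (lam / 4) := by
    apply jc_card φ I lam hlam J hJ1 t htI htmono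
    intro i hi
    have := Finset.mem_filter.mp hi
    exact ⟨by have := Finset.mem_range.mp this.1; omega, this.2⟩
  have hψ' : (Sψ.card : ℕ∞) + 1 ≤ jumpCount ψ I (lam / 4) := by
    apply jc_card ψ I lam hlam J hJ1 t htI htmono
    intro i hi
    have := Finset.mem_filter.mp hi
    exact ⟨by have := Finset.mem_range.mp this.1; omega, this.2⟩
  have hJle : (J : ℕ∞) ≤ ((Sφ.card : ℕ∞) + 1) + ((Sψ.card : ℕ∞) + 1) := by
    have h1 : J ≤ Sφ.card + 1 + (Sψ.card + 1) := by omega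
    calc (J : ℕ∞) ≤ ((Sφ.card + 1 + (Sψ.card + 1) : ℕ) : ℕ∞) := Nat.cast_le.mpr h1
      _ = ((Sφ.card : ℕ∞) + 1) + ((Sψ.card : ℕ∞) + 1) := by push_cast; ring
  calc (J : ℕ∞) ≤ ((Sφ.card : ℕ∞) + 1) + ((Sψ.card : ℕ∞) + 1) := hJle
    _ ≤ jumpCount φ I (lam / 4) + jumpCount ψ I (lam / 4) := add_le_add hφ' hψ'
    _ ≤ 2 * (jumpCount φ I (lam / 4) + jumpCount ψ I (lam / 4)) :=
        le_mul_of_one_le_left zero_le one_le_two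
end

section
/- With Q symmetric positive definite and B having all eigenvalues with negative real part, the covariance matrices Q_t = ∫₀^t e^{sB} Q e^{sB*} ds satisfy the operator norm bound ‖Q_t^{-1}‖ ≤ C / t for 0 < t < 1, with C depending only on Q and B. -/
open MeasureTheory Matrix

attribute [local instance] Matrix.linftyOpNormedAddCommGroup Matrix.linftyOpNormedSpace
  Matrix.linftyOpNormedRing Matrix.linftyOpNormedAlgebra

/-- If `ε ‖x‖² ≤ xᵀ A x` for all `x` (sup norm), then `A` is invertible and
`‖A⁻¹‖ ≤ n / ε` in the `l∞` operator norm. -/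
lemma inv_norm_le_aux {n : ℕ} (A : Matrix (Fin n) (Fin n) ℝ) (ε : ℝ) (hε : 0 < ε)
    (h : ∀ x : Fin n → ℝ, ε * (‖x‖ * ‖x‖) ≤ x ⬝ᵥ (A *ᵥ x)) :
    ‖A⁻¹‖ ≤ (n : ℝ) / ε := by
  -- A has nonzero determinant
  have hdet : A.det ≠ 0 := by
    intro hd
    obtain ⟨v, hv0, hv⟩ := (Matrix.exists_mulVec_eq_zero_iff).2 hd
    have := h v
    rw [hv, dotProduct_zero] at this
    have hvn : 0 < ‖v‖ := norm_pos_iff.2 hv0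
    nlinarith [mul_pos hε (mul_pos hvn hvn)]
  -- key: ε ‖A⁻¹ *ᵥ x‖ ≤ n * ‖x‖
  have key : ∀ x : Fin n → ℝ, ε * ‖A⁻¹ *ᵥ x‖ ≤ (n : ℝ) * ‖x‖ := by
    intro x
    set y := A⁻¹ *ᵥ x with hy
    have hAy : A *ᵥ y = x := by
      rw [hy, Matrix.mulVec_mulVec, Matrix.mul_nonsing_inv _ (isUnit_iff_ne_zero.2 hdet),
        Matrix.one_mulVec]
    have h1 : y ⬝ᵥ (A *ᵥ y) ≤ (n : ℝ) * ‖x‖ * ‖y‖ := by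
      rw [hAy]
      calc y ⬝ᵥ x ≤ |y ⬝ᵥ x| := le_abs_self _
        _ ≤ ∑ i, |y i * x i| := by
            rw [dotProduct]; exact Finset.abs_sum_le_sum_abs _ _
        _ ≤ ∑ _i : Fin n, ‖x‖ * ‖y‖ := by
            apply Finset.sum_le_sum
            intro i _
            rw [abs_mul, mul_comm]
            have h2 : |x i| ≤ ‖x‖ := norm_le_pi_norm x i
            have h3 : |y i| ≤ ‖y‖ := norm_le_pi_norm y i
            have := abs_nonneg (x i); have := abs_nonneg (y i)
            have := norm_nonneg x; have := norm_nonneg y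
            nlinarith
        _ = (n : ℝ) * ‖x‖ * ‖y‖ := by
            rw [Finset.sum_const, Finset.card_univ, Fintype.card_fin]; ring
    have h0 := h y
    have hyn := norm_nonneg y
    have hxn := norm_nonneg x
    rcases eq_or_lt_of_le hyn with hy0 | hy0
    · rw [← hy0, mul_zero]; positivity
    · have : ε * (‖y‖ * ‖y‖) ≤ (n : ℝ) * ‖x‖ * ‖y‖ := le_trans h0 h1
      nlinarith
  have h0 : (0:ℝ) ≤ (n:ℝ) / ε := by positivity
  rw [Matrix.linfty_opNorm_def, ← Real.coe_toNNReal ((n:ℝ)/ε) h0, NNReal.coe_le_coe]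
  apply Finset.sup_le
  intro i _
  rw [← NNReal.coe_le_coe, Real.coe_toNNReal _ h0, NNReal.coe_sum]
  simp only [coe_nnnorm]
  set z : Fin n → ℝ := fun j => if 0 ≤ A⁻¹ i j then 1 else -1 with hz
  have hzn : ‖z‖ ≤ 1 := by
    rw [pi_norm_le_iff_of_nonneg zero_le_one]
    intro j
    rw [hz]; dsimp only; split <;> simp
  have hsum : ∑ j, ‖A⁻¹ i j‖ = (A⁻¹ *ᵥ z) i := by
    rw [Matrix.mulVec, dotProduct]
    apply Finset.sum_congr rfl
    intro j _
    rw [hz]; dsimp only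
    rcases le_or_gt 0 (A⁻¹ i j) with hle | hlt
    · simp [hle, abs_of_nonneg hle]
    · simp [not_le.2 hlt, abs_of_neg hlt]
  rw [hsum, le_div_iff₀ hε]
  have h1 : (A⁻¹ *ᵥ z) i ≤ ‖A⁻¹ *ᵥ z‖ := by
    have := norm_le_pi_norm (A⁻¹ *ᵥ z) i
    rw [Real.norm_eq_abs] at this
    exact le_trans (le_abs_self _) this
  have h2 := key z
  have h3 : (0:ℝ) ≤ (n:ℝ) := Nat.cast_nonneg n
  nlinarith [norm_nonneg (A⁻¹ *ᵥ z)]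

lemma conj_qf {n : ℕ} (E Q : Matrix (Fin n) (Fin n) ℝ) (x : Fin n → ℝ) :
    x ⬝ᵥ ((E * Q * Eᵀ) *ᵥ x) = (Eᵀ *ᵥ x) ⬝ᵥ (Q *ᵥ (Eᵀ *ᵥ x)) := by
  rw [← Matrix.mulVec_mulVec, ← Matrix.mulVec_mulVec, dotProduct_mulVec x E,
    ← Matrix.mulVec_transpose]

lemma exp_conj_cancel {n : ℕ} (B : Matrix (Fin n) (Fin n) ℝ) (s : ℝ) (x : Fin n → ℝ) :
    (NormedSpace.exp (-(s • B)))ᵀ *ᵥ ((NormedSpace.exp (s • B))ᵀ *ᵥ x) = x := by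
  haveI : CompleteSpace (Matrix (Fin n) (Fin n) ℝ) := FiniteDimensional.complete ℝ _
  rw [Matrix.mulVec_mulVec, ← Matrix.transpose_mul]
  have h : NormedSpace.exp (s • B) * NormedSpace.exp (-(s • B)) = 1 := by
    rw [← Matrix.exp_add_of_commute (s • B) (-(s • B)) ((Commute.refl _).neg_right), add_neg_cancel,
      NormedSpace.exp_zero]
  rw [h, Matrix.transpose_one, Matrix.one_mulVec]

lemma qf_lower_bound {n : ℕ} (hn : 0 < n) (Q B : Matrix (Fin n) (Fin n) ℝ)
    (hQpos : Q.PosDef) :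
    ∃ c > 0, ∀ s ∈ Set.Icc (0:ℝ) 1, ∀ x : Fin n → ℝ,
      c * (‖x‖ * ‖x‖) ≤
        x ⬝ᵥ ((NormedSpace.exp (s • B) * Q * (NormedSpace.exp (s • B))ᵀ) *ᵥ x) := by
  haveI : CompleteSpace (Matrix (Fin n) (Fin n) ℝ) := FiniteDimensional.complete ℝ _
  haveI : Nonempty (Fin n) := Fin.pos_iff_nonempty.1 hn
  set Mf : ℝ → Matrix (Fin n) (Fin n) ℝ :=
    fun s => NormedSpace.exp (s • B) * Q * (NormedSpace.exp (s • B))ᵀ with hMf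
  have hexp : Continuous fun s : ℝ => NormedSpace.exp (s • B) :=
    NormedSpace.exp_continuous.comp (continuous_id.smul continuous_const)
  have hMcont : Continuous Mf := (hexp.mul continuous_const).mul hexp.matrix_transpose
  set g : ℝ × (Fin n → ℝ) → ℝ := fun p => p.2 ⬝ᵥ (Mf p.1 *ᵥ p.2) with hg
  have hgc : Continuous g :=
    continuous_snd.dotProduct ((hMcont.comp continuous_fst).matrix_mulVec continuous_snd)
  set K : Set (ℝ × (Fin n → ℝ)) := Set.Icc (0:ℝ) 1 ×ˢ Metric.sphere (0 : Fin n → ℝ) 1 with hK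
  have hKc : IsCompact K := isCompact_Icc.prod (isCompact_sphere 0 1)
  obtain ⟨y, hy⟩ := (NormedSpace.sphere_nonempty (E := Fin n → ℝ) (x := 0) (r := 1)).mpr zero_le_one
  have hKne : K.Nonempty := ⟨(0, y), ⟨Set.left_mem_Icc.2 zero_le_one, hy⟩⟩
  obtain ⟨p₀, hp₀K, hmin⟩ := hKc.exists_isMinOn hKne hgc.continuousOn
  have hqf_pos : ∀ s : ℝ, ∀ x : Fin n → ℝ, x ≠ 0 → 0 < g (s, x) := by
    intro s x hx
    have hne : (NormedSpace.exp (s • B))ᵀ *ᵥ x ≠ 0 := by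
      intro h0
      apply hx
      have := exp_conj_cancel B s x
      rw [h0, Matrix.mulVec_zero] at this
      exact this.symm
    have := hQpos.dotProduct_mulVec_pos hne
    simp only [star_trivial] at this
    simpa [hg, hMf, conj_qf] using this
  have hc0 : 0 < g p₀ := by
    obtain ⟨hp1, hp2⟩ := hp₀K
    have : p₀.2 ≠ 0 := by
      intro h0
      have := mem_sphere_zero_iff_norm.1 hp2
      rw [h0, norm_zero] at this
      exact one_ne_zero this.symm
    simpa using hqf_pos p₀.1 p₀.2 this
  refine ⟨g p₀, hc0, fun s hs x => ?_⟩
  rcases eq_or_ne x 0 with rfl | hx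
  · simp [hg, hMf]
  · have hxn : 0 < ‖x‖ := norm_pos_iff.2 hx
    set u : Fin n → ℝ := ‖x‖⁻¹ • x with hu
    have hun : u ∈ Metric.sphere (0 : Fin n → ℝ) 1 := by
      rw [mem_sphere_zero_iff_norm, hu, norm_smul, norm_inv, norm_norm,
        inv_mul_cancel₀ hxn.ne']
    have hxu : x = ‖x‖ • u := by
      rw [hu, smul_smul, mul_inv_cancel₀ hxn.ne', one_smul]
    have hmem : (s, u) ∈ K := ⟨hs, hun⟩
    have hle : g p₀ ≤ g (s, u) := hmin hmem
    have hqf : x ⬝ᵥ (Mf s *ᵥ x) = ‖x‖ * (‖x‖ * (u ⬝ᵥ (Mf s *ᵥ u))) := by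
      conv_lhs => rw [hxu]
      rw [Matrix.mulVec_smul, smul_dotProduct, dotProduct_smul,
        smul_eq_mul, smul_eq_mul]
    show g p₀ * (‖x‖ * ‖x‖) ≤ x ⬝ᵥ (Mf s *ᵥ x)
    rw [hqf]
    nlinarith [hle, hxn.le]

/-- All complex eigenvalues of the real matrix `B` have negative real part. -/
def eigenvaluesNegRe {n : ℕ} (B : Matrix (Fin n) (Fin n) ℝ) : Prop :=
  ∀ μ ∈ spectrum ℂ (B.map (Complex.ofReal : ℝ → ℂ)), μ.re < 0

/-- The covariance matrix `Q_t = ∫₀^t e^{sB} Q e^{sB^*} ds`. -/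
noncomputable def Qmat {n : ℕ} (Q B : Matrix (Fin n) (Fin n) ℝ) (t : ℝ) :
    Matrix (Fin n) (Fin n) ℝ :=
  ∫ s in (0:ℝ)..t, NormedSpace.exp (s • B) * Q * (NormedSpace.exp (s • B))ᵀ

/-- The covariance matrix `Q_∞ = ∫₀^∞ e^{sB} Q e^{sB^*} ds`. -/
noncomputable def Qinf {n : ℕ} (Q B : Matrix (Fin n) (Fin n) ℝ) :
    Matrix (Fin n) (Fin n) ℝ :=
  ∫ s in Set.Ioi (0:ℝ), NormedSpace.exp (s • B) * Q * (NormedSpace.exp (s • B))ᵀ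
theorem Qt_inv_norm_bound {n : ℕ} (Q B : Matrix (Fin n) (Fin n) ℝ)
    (hQsymm : Q.IsSymm) (hQpos : Q.PosDef) (hB : eigenvaluesNegRe B) :
    ∃ C > 0, ∀ t : ℝ, 0 < t → t < 1 → ‖(Qmat Q B t)⁻¹‖ ≤ C / t := by
  haveI : CompleteSpace (Matrix (Fin n) (Fin n) ℝ) := FiniteDimensional.complete ℝ _
  rcases Nat.eq_zero_or_pos n with rfl | hn
  · refine ⟨1, one_pos, fun t ht ht1 => ?_⟩
    have : (Qmat Q B t)⁻¹ = 0 := Subsingleton.elim _ _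
    rw [this, norm_zero]
    positivity
  obtain ⟨c, hc0, hc⟩ := qf_lower_bound hn Q B hQpos
  refine ⟨(n : ℝ) / c, by positivity, fun t ht ht1 => ?_⟩
  set Mf : ℝ → Matrix (Fin n) (Fin n) ℝ :=
    fun s => NormedSpace.exp (s • B) * Q * (NormedSpace.exp (s • B))ᵀ with hMf
  have hexp : Continuous fun s : ℝ => NormedSpace.exp (s • B) :=
    NormedSpace.exp_continuous.comp (continuous_id.smul continuous_const)
  have hMcont : Continuous Mf := (hexp.mul continuous_const).mul hexp.matrix_transpose
  have hInt := hMcont.intervalIntegrable (μ := volume) 0 t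
  -- quadratic form lower bound for Qmat
  have hqf : ∀ x : Fin n → ℝ, (c * t) * (‖x‖ * ‖x‖) ≤ x ⬝ᵥ (Qmat Q B t *ᵥ x) := by
    intro x
    set L : Matrix (Fin n) (Fin n) ℝ →L[ℝ] ℝ := LinearMap.toContinuousLinearMap
      { toFun := fun M => x ⬝ᵥ (M *ᵥ x)
        map_add' := fun M N => by simp [Matrix.add_mulVec, dotProduct_add]
        map_smul' := fun r M => by
          simp [Matrix.smul_mulVec, dotProduct_smul] } with hL
    have hcomm := L.intervalIntegral_comp_comm hInt
    have hQL : x ⬝ᵥ (Qmat Q B t *ᵥ x) = ∫ s in (0:ℝ)..t, x ⬝ᵥ (Mf s *ᵥ x) := by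
      rw [Qmat]
      exact hcomm.symm
    rw [hQL]
    have hscont : Continuous fun s => x ⬝ᵥ (Mf s *ᵥ x) :=
      continuous_const.dotProduct (hMcont.matrix_mulVec continuous_const)
    have hmono := intervalIntegral.integral_mono_on (μ := volume) ht.le
      (intervalIntegrable_const (c := c * (‖x‖ * ‖x‖))) (hscont.intervalIntegrable 0 t)
      (fun s hs => hc s ⟨hs.1, hs.2.trans ht1.le⟩ x)
    rw [intervalIntegral.integral_const, sub_zero, smul_eq_mul] at hmono
    calc (c * t) * (‖x‖ * ‖x‖) = t * (c * (‖x‖ * ‖x‖)) := by ring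
      _ ≤ _ := hmono
  have hb := inv_norm_le_aux (Qmat Q B t) (c * t) (mul_pos hc0 ht) hqf
  calc ‖(Qmat Q B t)⁻¹‖ ≤ (n : ℝ) / (c * t) := hb
    _ = (n : ℝ) / c / t := by rw [div_div]
end

section
/- With Q symmetric positive definite and B having all eigenvalues with negative real part, the determinant of Q_t = ∫₀^t e^{sB} Q e^{sB*} ds satisfies det Q_t = t^n · det Q · (1 + O(t)) as t → 0. -/
open MeasureTheory Matrix

attribute [local instance] Matrix.linftyOpNormedAddCommGroup Matrix.linftyOpNormedSpace
  Matrix.linftyOpNormedRing Matrix.linftyOpNormedAlgebra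

section Aux


lemma det_multilinear_bound {n : ℕ} (m : ∀ _ : Fin n, Fin n → ℝ) :
    ‖(Matrix.detRowAlternating : AlternatingMap ℝ (Fin n → ℝ) ℝ (Fin n)).toMultilinearMap m‖
      ≤ (n.factorial : ℝ) * ∏ i, ‖m i‖ := by
  have h : (Matrix.detRowAlternating : AlternatingMap ℝ (Fin n → ℝ) ℝ (Fin n)).toMultilinearMap m
      = Matrix.det (Matrix.of m) := rfl
  rw [h, Matrix.det_apply']
  have hterm : ∀ σ : Equiv.Perm (Fin n),
      ‖((Equiv.Perm.sign σ : ℤ) : ℝ) * ∏ i, Matrix.of m (σ i) i‖ ≤ ∏ i, ‖m i‖ := by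
    intro σ
    rw [norm_mul]
    have h1 : ‖((Equiv.Perm.sign σ : ℤ) : ℝ)‖ = 1 := by
      rcases Int.units_eq_one_or (Equiv.Perm.sign σ) with h | h <;> simp [h]
    rw [h1, one_mul, Real.norm_eq_abs, Finset.abs_prod]
    calc ∏ i, |Matrix.of m (σ i) i| ≤ ∏ i, ‖m (σ i)‖ := by
          apply Finset.prod_le_prod (fun _ _ => abs_nonneg _)
          intro i _
          exact (norm_le_pi_norm (m (σ i)) i :)
      _ = ∏ i, ‖m i‖ := Equiv.prod_comp σ (fun i => ‖m i‖)
  refine le_trans (norm_sum_le _ _) (le_trans (Finset.sum_le_sum (fun σ _ => hterm σ)) ?_)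
  rw [Finset.sum_const, Finset.card_univ, Fintype.card_perm]
  simp [nsmul_eq_mul]

lemma det_sub_bound {n : ℕ} (A A' : Matrix (Fin n) (Fin n) ℝ) {R d : ℝ} (hR : 0 ≤ R) (hd : 0 ≤ d)
    (hA : ∀ i j, |A i j| ≤ R) (hA' : ∀ i j, |A' i j| ≤ R)
    (hAA' : ∀ i j, |A i j - A' i j| ≤ d) :
    |A.det - A'.det| ≤ ((n.factorial : ℝ) * n) * R ^ (n - 1) * d := by
  set a : ∀ _ : Fin n, Fin n → ℝ := fun i => A i with ha
  set a' : ∀ _ : Fin n, Fin n → ℝ := fun i => A' i with ha'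
  have key := MultilinearMap.norm_image_sub_le_of_bound
    (f := (Matrix.detRowAlternating : AlternatingMap ℝ (Fin n → ℝ) ℝ (Fin n)).toMultilinearMap)
    (C := (n.factorial : ℝ)) (by positivity) (fun m => det_multilinear_bound m) a a'
  have hfa : (Matrix.detRowAlternating : AlternatingMap ℝ (Fin n → ℝ) ℝ (Fin n)).toMultilinearMap
      a = A.det := rfl
  have hfa' : (Matrix.detRowAlternating : AlternatingMap ℝ (Fin n → ℝ) ℝ (Fin n)).toMultilinearMap
      a' = A'.det := rfl
  rw [hfa, hfa'] at key
  have hnormA : ‖a‖ ≤ R := by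
    rw [pi_norm_le_iff_of_nonneg hR]
    intro i
    rw [pi_norm_le_iff_of_nonneg hR]
    intro j
    simpa [ha, Real.norm_eq_abs] using hA i j
  have hnormA' : ‖a'‖ ≤ R := by
    rw [pi_norm_le_iff_of_nonneg hR]
    intro i
    rw [pi_norm_le_iff_of_nonneg hR]
    intro j
    simpa [ha', Real.norm_eq_abs] using hA' i j
  have hnormd : ‖a - a'‖ ≤ d := by
    rw [pi_norm_le_iff_of_nonneg hd]
    intro i
    rw [pi_norm_le_iff_of_nonneg hd]
    intro j
    simpa [ha, ha', Real.norm_eq_abs] using hAA' i j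
  calc |A.det - A'.det|
      ≤ (n.factorial : ℝ) * (Fintype.card (Fin n)) * max ‖a‖ ‖a'‖ ^ (Fintype.card (Fin n) - 1)
        * ‖a - a'‖ := key
    _ ≤ ((n.factorial : ℝ) * n) * R ^ (n - 1) * d := by
        rw [Fintype.card_fin]
        have hmax : max ‖a‖ ‖a'‖ ≤ R := max_le hnormA hnormA'
        have h0 : (0:ℝ) ≤ max ‖a‖ ‖a'‖ := le_max_of_le_left (norm_nonneg _)
        gcongr

end Aux

section Main

noncomputable instance matrixENormedAddMonoidAux {n : ℕ} :
    ENormedAddMonoid (Matrix (Fin n) (Fin n) ℝ) :=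
  NormedAddGroup.toENormedAddMonoid

variable {n : ℕ} (Q B : Matrix (Fin n) (Fin n) ℝ)

lemma entry_abs_le_norm (A : Matrix (Fin n) (Fin n) ℝ) (i j : Fin n) : |A i j| ≤ ‖A‖ := by
  rw [Matrix.linfty_opNorm_def]
  have h1 : ‖A i j‖₊ ≤ ∑ j', ‖A i j'‖₊ :=
    Finset.single_le_sum (f := fun j' => ‖A i j'‖₊) (fun _ _ => zero_le') (Finset.mem_univ j)
  have h2 : (∑ j', ‖A i j'‖₊) ≤ Finset.univ.sup fun i => ∑ j', ‖A i j'‖₊ :=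
    Finset.le_sup (f := fun i => ∑ j', ‖A i j'‖₊) (Finset.mem_univ i)
  calc |A i j| = (‖A i j‖₊ : ℝ) := rfl
    _ ≤ _ := by exact_mod_cast h1.trans h2

lemma exp_cont : Continuous (fun s : ℝ => NormedSpace.exp (s • B)) :=
  NormedSpace.exp_continuous.comp (continuous_id.smul continuous_const)

lemma g_cont : Continuous (fun s : ℝ =>
    NormedSpace.exp (s • B) * Q * (NormedSpace.exp (s • B))ᵀ) :=
  ((exp_cont B).mul continuous_const).mul (exp_cont B).matrix_transpose

lemma transpose_hasDerivAt {f : ℝ → Matrix (Fin n) (Fin n) ℝ} {f' : Matrix (Fin n) (Fin n) ℝ}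
    {s : ℝ} (hf : HasDerivAt f f' s) : HasDerivAt (fun x => (f x)ᵀ) f'ᵀ s := by
  have hT := (LinearMap.toContinuousLinearMap
    ((Matrix.transposeLinearEquiv (Fin n) (Fin n) ℝ ℝ).toLinearMap)).hasFDerivAt (x := f s)
  exact hT.comp_hasDerivAt s hf

lemma g_hasDeriv (s : ℝ) : HasDerivAt (fun s : ℝ =>
    NormedSpace.exp (s • B) * Q * (NormedSpace.exp (s • B))ᵀ)
    ((B * NormedSpace.exp (s • B) * Q) * (NormedSpace.exp (s • B))ᵀ
      + (NormedSpace.exp (s • B) * Q) * (B * NormedSpace.exp (s • B))ᵀ) s := by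
  have h1 : HasDerivAt (fun s : ℝ => NormedSpace.exp (s • B))
      (B * NormedSpace.exp (s • B)) s := hasDerivAt_exp_smul_const' B s
  exact (h1.mul_const Q).mul (transpose_hasDerivAt h1)

theorem Qt_approx : ∃ K ≥ 0, ∀ t : ℝ, 0 < t → t ≤ 1 →
    ‖Qmat Q B t - t • Q‖ ≤ K * t * t := by
  set g : ℝ → Matrix (Fin n) (Fin n) ℝ :=
    fun s => NormedSpace.exp (s • B) * Q * (NormedSpace.exp (s • B))ᵀ with hg
  set ψ : ℝ → Matrix (Fin n) (Fin n) ℝ := fun s =>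
    (B * NormedSpace.exp (s • B) * Q) * (NormedSpace.exp (s • B))ᵀ
      + (NormedSpace.exp (s • B) * Q) * (B * NormedSpace.exp (s • B))ᵀ with hψ
  have hψc : Continuous ψ := by
    apply Continuous.add
    · exact ((continuous_const.mul (exp_cont B)).mul continuous_const).mul
        (exp_cont B).matrix_transpose
    · exact ((exp_cont B).mul continuous_const).mul
        (continuous_const.mul (exp_cont B)).matrix_transpose
  obtain ⟨K₀, hK₀⟩ := (isCompact_Icc (a := (0:ℝ)) (b := 1)).exists_bound_of_continuousOn
    hψc.continuousOn
  set K := max K₀ 0 with hKdef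
  have hKnn : (0:ℝ) ≤ K := le_max_right _ _
  refine ⟨K, hKnn, ?_⟩
  intro t ht ht1
  have hg0 : g 0 = Q := by simp [hg]
  have hLip : ∀ s ∈ Set.Icc (0:ℝ) 1, ‖g s - Q‖ ≤ K * s := by
    intro s hs
    have := (convex_Icc (0:ℝ) 1).norm_image_sub_le_of_norm_hasDerivWithin_le
      (f := g) (f' := ψ) (C := K)
      (fun x hx => (g_hasDeriv Q B x).hasDerivWithinAt)
      (fun x hx => le_trans (hK₀ x hx) (le_max_left _ _))
      (Set.left_mem_Icc.2 zero_le_one) hs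
    simpa [hg0, hs.1, abs_of_nonneg hs.1] using this
  have hgi : IntervalIntegrable g volume 0 t := (g_cont Q B).intervalIntegrable _ _
  have hsub : Qmat Q B t - t • Q = ∫ s in (0:ℝ)..t, (g s - Q) := by
    rw [intervalIntegral.integral_sub hgi intervalIntegrable_const,
      intervalIntegral.integral_const, sub_zero]
    rfl
  rw [hsub]
  have := intervalIntegral.norm_integral_le_of_norm_le_const
    (C := K * t) (f := fun s => g s - Q) (a := (0:ℝ)) (b := t) ?_
  · calc ‖∫ s in (0:ℝ)..t, (g s - Q)‖ ≤ K * t * |t - 0| := this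
      _ = K * t * t := by rw [sub_zero, abs_of_pos ht]
  · intro x hx
    rw [Set.uIoc_of_le ht.le] at hx
    exact le_trans (hLip x ⟨hx.1.le, hx.2.trans ht1⟩) (by nlinarith [hx.2, hKnn])

end Main

theorem Qt_det_approx {n : ℕ} (Q B : Matrix (Fin n) (Fin n) ℝ)
    (hQsymm : Q.IsSymm) (hQpos : Q.PosDef) (hB : eigenvaluesNegRe B) :
    ∃ C > 0, ∃ t₀ > 0, ∀ t : ℝ, 0 < t → t < t₀ →
      |(Qmat Q B t).det / (t ^ n * Q.det) - 1| ≤ C * t := by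
  classical
  obtain ⟨K, hKnn, hK⟩ := Qt_approx Q B
  have hQdet : 0 < Q.det := hQpos.det_pos
  set R : ℝ := ‖Q‖ + 1 with hR
  have hRnn : (0:ℝ) ≤ R := by positivity
  set D : ℝ := ((n.factorial : ℝ) * n) * R ^ (n - 1) with hD
  have hDnn : (0:ℝ) ≤ D := by positivity
  refine ⟨D * K / Q.det + 1, by positivity, min 1 (1 / (K + 1)), by positivity, ?_⟩
  intro t ht htlt
  have ht1 : t ≤ 1 := le_of_lt (lt_of_lt_of_le htlt (min_le_left _ _))
  have htK : K * t ≤ 1 := by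
    have h2 : t < 1 / (K + 1) := lt_of_lt_of_le htlt (min_le_right _ _)
    have hK1 : (0:ℝ) < K + 1 := by linarith
    rw [lt_div_iff₀ hK1] at h2
    nlinarith
  have hQt := hK t ht ht1
  have htne : t ≠ 0 := ne_of_gt ht
  set A : Matrix (Fin n) (Fin n) ℝ := t⁻¹ • Qmat Q B t with hA
  have hentry : ∀ i j, |A i j - Q i j| ≤ K * t := by
    intro i j
    have h1 : |(Qmat Q B t - t • Q) i j| ≤ K * t * t :=
      le_trans (entry_abs_le_norm _ i j) hQt
    have h2 : (Qmat Q B t - t • Q) i j = Qmat Q B t i j - t * Q i j := by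
      simp [Matrix.sub_apply, Matrix.smul_apply, smul_eq_mul]
    rw [h2] at h1
    have h3 : A i j - Q i j = t⁻¹ * (Qmat Q B t i j - t * Q i j) := by
      rw [hA, Matrix.smul_apply, smul_eq_mul]
      field_simp
    rw [h3, abs_mul, abs_inv, abs_of_pos ht]
    rw [inv_mul_le_iff₀ ht]
    calc |Qmat Q B t i j - t * Q i j| ≤ K * t * t := h1
      _ = t * (K * t) := by ring
  have hAbound : ∀ i j, |A i j| ≤ R := by
    intro i j
    have := hentry i j
    have hq : |Q i j| ≤ ‖Q‖ := entry_abs_le_norm Q i j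
    calc |A i j| = |(A i j - Q i j) + Q i j| := by ring_nf
      _ ≤ |A i j - Q i j| + |Q i j| := abs_add_le _ _
      _ ≤ K * t + ‖Q‖ := add_le_add this hq
      _ ≤ R := by rw [hR]; linarith
  have hQbound : ∀ i j, |Q i j| ≤ R := by
    intro i j
    have hq : |Q i j| ≤ ‖Q‖ := entry_abs_le_norm Q i j
    linarith
  have hdet : |A.det - Q.det| ≤ D * (K * t) :=
    det_sub_bound A Q hRnn (by positivity) hAbound hQbound hentry
  have hsmul : t • A = Qmat Q B t := by
    rw [hA, smul_smul, mul_inv_cancel₀ htne, one_smul]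
  have hdetQt : (Qmat Q B t).det = t ^ n * A.det := by
    rw [← hsmul, Matrix.det_smul, Fintype.card_fin]
  have htn : t ^ n ≠ 0 := pow_ne_zero _ htne
  have hratio : (Qmat Q B t).det / (t ^ n * Q.det) - 1 = (A.det - Q.det) / Q.det := by
    rw [hdetQt, mul_div_mul_left _ _ htn, div_sub_one (ne_of_gt hQdet)]
  rw [hratio, abs_div, abs_of_pos hQdet]
  rw [div_le_iff₀ hQdet]
  calc |A.det - Q.det| ≤ D * (K * t) := hdet
    _ = D * K / Q.det * t * Q.det := by field_simp
    _ ≤ (D * K / Q.det + 1) * t * Q.det := by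
        have : (0:ℝ) ≤ t * Q.det := by positivity
        nlinarith
end

section
/- The time derivative of the Mehler kernel satisfies ∂_t K_t(x,u) = K_t(x,u) · N_t^{(0)}(x,u), where N_t^{(0)}(x,u) = −½ tr(Q_t^{−1} e^{tB} Q e^{tB*}) + ½ |Q^{1/2} e^{tB*} Q_t^{−1}(u − D_t x)|² − ⟨Q_∞ B* Q_∞^{−1} D_t x, (Q_t^{−1} − Q_∞^{−1})(u − D_t x)⟩, for all x, u ∈ ℝⁿ and t > 0. -/
open MeasureTheory Matrix

attribute [local instance] Matrix.linftyOpNormedAddCommGroup Matrix.linftyOpNormedSpace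
  Matrix.linftyOpNormedRing Matrix.linftyOpNormedAlgebra

/-- The one-parameter family `D_t = Q_∞ e^{-tB^*} Q_∞^{-1}`. -/
noncomputable def Dmat {n : ℕ} (Q B : Matrix (Fin n) (Fin n) ℝ) (t : ℝ) :
    Matrix (Fin n) (Fin n) ℝ :=
  Qinf Q B * NormedSpace.exp (-(t • Bᵀ)) * (Qinf Q B)⁻¹


/-- The quadratic form `R(x) = ½⟨Q_∞⁻¹ x, x⟩`. -/
noncomputable def Rquad {n : ℕ} (Q B : Matrix (Fin n) (Fin n) ℝ) (x : Fin n → ℝ) : ℝ :=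
  (1 / 2) * ((Qinf Q B)⁻¹.mulVec x ⬝ᵥ x)

/-- The Mehler kernel of the Ornstein--Uhlenbeck semigroup. -/
noncomputable def mehlerK {n : ℕ} (Q B : Matrix (Fin n) (Fin n) ℝ) (t : ℝ)
    (x u : Fin n → ℝ) : ℝ :=
  Real.sqrt ((Qinf Q B).det / (Qmat Q B t).det) * Real.exp (Rquad Q B x) *
    Real.exp (-(1 / 2) *
      ((((Qmat Q B t)⁻¹ - (Qinf Q B)⁻¹).mulVec (u - (Dmat Q B t).mulVec x)) ⬝ᵥ
        (u - (Dmat Q B t).mulVec x)))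

/-- The Euclidean norm on ℝ^n. -/
noncomputable def euclNorm {n : ℕ} (v : Fin n → ℝ) : ℝ :=
  Real.sqrt (∑ i, v i ^ 2)

/-- The logarithmic time derivative `N_t^{(0)}(x,u)` of the Mehler kernel; here
`|Q^{1/2} w|²` is written as `⟨Q w, w⟩`. -/
noncomputable def N0 {n : ℕ} (Q B : Matrix (Fin n) (Fin n) ℝ) (t : ℝ)
    (x u : Fin n → ℝ) : ℝ :=
  -(1 / 2) * ((Qmat Q B t)⁻¹ * NormedSpace.exp (t • B) * Q *
      (NormedSpace.exp (t • B))ᵀ).trace +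
  (1 / 2) * (Q.mulVec ((NormedSpace.exp (t • B))ᵀ.mulVec
        ((Qmat Q B t)⁻¹.mulVec (u - (Dmat Q B t).mulVec x))) ⬝ᵥ
      (NormedSpace.exp (t • B))ᵀ.mulVec
        ((Qmat Q B t)⁻¹.mulVec (u - (Dmat Q B t).mulVec x))) -
  ((Qinf Q B * Bᵀ * (Qinf Q B)⁻¹).mulVec ((Dmat Q B t).mulVec x) ⬝ᵥ
    ((Qmat Q B t)⁻¹ - (Qinf Q B)⁻¹).mulVec (u - (Dmat Q B t).mulVec x))

namespace MehlerAux

variable {n : ℕ}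

noncomputable instance instMatENormedAddCommMonoid :
    ENormedAddCommMonoid (Matrix (Fin n) (Fin n) ℝ) :=
  NormedAddCommGroup.toENormedAddCommMonoid

/-! ### Continuous linear maps on matrices -/

noncomputable def transCLM : Matrix (Fin n) (Fin n) ℝ →L[ℝ] Matrix (Fin n) (Fin n) ℝ :=
  LinearMap.toContinuousLinearMap
    { toFun := Matrix.transpose
      map_add' := fun _ _ => Matrix.transpose_add _ _
      map_smul' := fun _ _ => Matrix.transpose_smul _ _ }

@[simp] lemma transCLM_apply (M : Matrix (Fin n) (Fin n) ℝ) : transCLM M = Mᵀ := rfl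

noncomputable def mulVecCLM (x : Fin n → ℝ) : Matrix (Fin n) (Fin n) ℝ →L[ℝ] (Fin n → ℝ) :=
  LinearMap.toContinuousLinearMap
    { toFun := fun M => M.mulVec x
      map_add' := fun M N => Matrix.add_mulVec M N x
      map_smul' := fun c M => by simp [Matrix.smul_mulVec] }

@[simp] lemma mulVecCLM_apply (x : Fin n → ℝ) (M : Matrix (Fin n) (Fin n) ℝ) :
    mulVecCLM x M = M.mulVec x := rfl

noncomputable def quadCLM (x : Fin n → ℝ) : Matrix (Fin n) (Fin n) ℝ →L[ℝ] ℝ :=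
  LinearMap.toContinuousLinearMap
    { toFun := fun M => x ⬝ᵥ M.mulVec x
      map_add' := fun M N => by simp [Matrix.add_mulVec, dotProduct_add]
      map_smul' := fun c M => by simp [Matrix.smul_mulVec, dotProduct_smul] }

@[simp] lemma quadCLM_apply (x : Fin n → ℝ) (M : Matrix (Fin n) (Fin n) ℝ) :
    quadCLM x M = x ⬝ᵥ M.mulVec x := rfl

noncomputable def entryCLM (i j : Fin n) : Matrix (Fin n) (Fin n) ℝ →L[ℝ] ℝ :=
  LinearMap.toContinuousLinearMap
    { toFun := fun M => M i j
      map_add' := fun _ _ => rfl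
      map_smul' := fun _ _ => rfl }

noncomputable def rowsCLM : Matrix (Fin n) (Fin n) ℝ →L[ℝ] (Fin n → Fin n → ℝ) :=
  LinearMap.toContinuousLinearMap
    { toFun := fun M i => M i
      map_add' := fun _ _ => rfl
      map_smul' := fun _ _ => rfl }

/-! ### Basic facts about `Qmat`, `Qinf` -/

variable (Q B : Matrix (Fin n) (Fin n) ℝ)

noncomputable def fQ (s : ℝ) : Matrix (Fin n) (Fin n) ℝ :=
  NormedSpace.exp (s • B) * Q * (NormedSpace.exp (s • B))ᵀ

lemma Qmat_eq (t : ℝ) : Qmat Q B t = ∫ s in (0:ℝ)..t, fQ Q B s := rfl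

lemma contfQ : Continuous (fQ Q B) := by
  have h1 : Continuous fun s : ℝ => NormedSpace.exp (s • B) :=
    NormedSpace.exp_continuous.comp (by continuity)
  exact (h1.mul continuous_const).mul (transCLM.continuous.comp h1)

lemma hasDerivAt_Q (t : ℝ) : HasDerivAt (fun τ => Qmat Q B τ) (fQ Q B t) t := by
  simp only [Qmat_eq]
  exact ((contfQ Q B).integral_hasStrictDerivAt 0 t).hasDerivAt

lemma fQ_transpose (hQ : Q.IsSymm) (s : ℝ) : (fQ Q B s)ᵀ = fQ Q B s := by
  unfold fQ
  rw [Matrix.transpose_mul, Matrix.transpose_mul, Matrix.transpose_transpose, hQ.eq]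
  rw [mul_assoc]

lemma intInt (a b : ℝ) : IntervalIntegrable (fQ Q B) volume a b :=
  (contfQ Q B).intervalIntegrable a b

lemma Qmat_isSymm (hQ : Q.IsSymm) (t : ℝ) : (Qmat Q B t).IsSymm := by
  unfold Matrix.IsSymm
  rw [Qmat_eq,
    show (∫ s in (0:ℝ)..t, fQ Q B s)ᵀ = transCLM (∫ s in (0:ℝ)..t, fQ Q B s) from rfl]
  refine (ContinuousLinearMap.intervalIntegral_comp_comm _ (intInt Q B 0 t)).symm.trans ?_
  exact congrArg (fun f : ℝ → Matrix (Fin n) (Fin n) ℝ => ∫ s in (0:ℝ)..t, f s)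
    (funext fun s => fQ_transpose Q B hQ s)

lemma Qinf_isSymm (hQ : Q.IsSymm) : (Qinf Q B).IsSymm := by
  unfold Matrix.IsSymm
  have he : Qinf Q B = ∫ s in Set.Ioi (0:ℝ), fQ Q B s := rfl
  rw [he]
  by_cases h : IntegrableOn (fQ Q B) (Set.Ioi 0) volume
  · rw [show (∫ s in Set.Ioi (0:ℝ), fQ Q B s)ᵀ = transCLM (∫ s in Set.Ioi (0:ℝ), fQ Q B s) from rfl]
    refine (ContinuousLinearMap.integral_comp_comm _ h).symm.trans ?_
    exact congrArg (fun f : ℝ → Matrix (Fin n) (Fin n) ℝ => ∫ s in Set.Ioi (0:ℝ), f s)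
      (funext fun s => fQ_transpose Q B hQ s)
  · rw [integral_undef h]
    exact Matrix.transpose_zero

lemma expT_mulVec_ne (s : ℝ) {x : Fin n → ℝ} (hx : x ≠ 0) :
    (NormedSpace.exp (s • B))ᵀ.mulVec x ≠ 0 := by
  intro h
  have hunit : IsUnit ((NormedSpace.exp (s • B))ᵀ) := by
    rw [← Matrix.exp_transpose]
    exact Matrix.isUnit_exp _
  have := hunit.invertible
  apply hx
  have hx2 : x = (⅟((NormedSpace.exp (s • B))ᵀ)).mulVec
      ((NormedSpace.exp (s • B))ᵀ.mulVec x) := by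
    rw [Matrix.mulVec_mulVec, invOf_mul_self, Matrix.one_mulVec]
  rw [hx2, h, Matrix.mulVec_zero]

lemma isHermitian_of_isSymm {M : Matrix (Fin n) (Fin n) ℝ} (h : M.IsSymm) : M.IsHermitian := by
  ext i j
  simp only [Matrix.conjTranspose_apply, star_trivial]
  exact congrFun (congrFun h i) j

lemma Qmat_posDef (hQs : Q.IsSymm) (hQ : Q.PosDef) {t : ℝ} (ht : 0 < t) :
    (Qmat Q B t).PosDef := by
  rw [Qmat_eq]
  refine Matrix.PosDef.of_dotProduct_mulVec_pos ?_ ?_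
  · exact isHermitian_of_isSymm (by rw [← Qmat_eq]; exact Qmat_isSymm Q B hQs t)
  · intro x hx
    have key : (star x) ⬝ᵥ ((∫ s in (0:ℝ)..t, fQ Q B s).mulVec x)
        = ∫ s in (0:ℝ)..t, (star x) ⬝ᵥ ((fQ Q B s).mulVec x) := by
      rw [show (star x) ⬝ᵥ ((∫ s in (0:ℝ)..t, fQ Q B s).mulVec x)
            = quadCLM x (∫ s in (0:ℝ)..t, fQ Q B s) from by simp]
      refine (ContinuousLinearMap.intervalIntegral_comp_comm _ (intInt Q B 0 t)).symm.trans ?_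
      simp
      rfl
    rw [key]
    have hpos : ∀ s ∈ Set.Ioo 0 t, 0 < (star x) ⬝ᵥ ((fQ Q B s).mulVec x) := by
      intro s _
      have hrw : (star x) ⬝ᵥ ((fQ Q B s).mulVec x)
          = star ((NormedSpace.exp (s • B))ᵀ.mulVec x) ⬝ᵥ
              (Q.mulVec ((NormedSpace.exp (s • B))ᵀ.mulVec x)) := by
        unfold fQ
        simp only [star_trivial, ← Matrix.mulVec_mulVec, Matrix.mulVec_transpose,
          Matrix.dotProduct_mulVec]
      rw [hrw]
      exact hQ.dotProduct_mulVec_pos (expT_mulVec_ne B s hx)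
    have hcont : Continuous fun s => (star x) ⬝ᵥ ((fQ Q B s).mulVec x) := by
      have he : (fun s => (star x) ⬝ᵥ ((fQ Q B s).mulVec x)) = fun s => quadCLM x (fQ Q B s) := by
        funext s; simp
      rw [he]; exact (quadCLM x).continuous.comp (contfQ Q B)
    exact intervalIntegral.intervalIntegral_pos_of_pos_on
      ((hcont.intervalIntegrable 0 t)) hpos ht

/-! ### Derivative of the determinant -/

noncomputable def detCMM (n : ℕ) : ContinuousMultilinearMap ℝ (fun _ : Fin n => (Fin n → ℝ)) ℝ :=
  MultilinearMap.mkContinuous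
    ((Matrix.detRowAlternating : (Fin n → ℝ) [⋀^Fin n]→ₗ[ℝ] ℝ).toMultilinearMap)
    (Nat.factorial n) (fun m => by
      show ‖Matrix.det (Matrix.of m)‖ ≤ _
      rw [Matrix.det_apply]
      refine (norm_sum_le _ _).trans ?_
      have hterm : ∀ σ : Equiv.Perm (Fin n),
          ‖Equiv.Perm.sign σ • ∏ i, (Matrix.of m) (σ i) i‖ ≤ ∏ i, ‖m i‖ := by
        intro σ
        have h1 : ‖Equiv.Perm.sign σ • ∏ i, (Matrix.of m) (σ i) i‖
            = ‖∏ i, m (σ i) i‖ := by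
          rw [Units.smul_def]
          rcases Int.units_eq_one_or (Equiv.Perm.sign σ) with h | h <;> rw [h] <;>
            simp only [Units.val_one, one_smul, Units.val_neg, neg_smul, norm_neg,
              Matrix.of_apply]
        rw [h1]
        calc ‖∏ i, m (σ i) i‖ ≤ ∏ i, ‖m (σ i) i‖ := le_of_eq (norm_prod _ _)
          _ ≤ ∏ i, ‖m (σ i)‖ :=
              Finset.prod_le_prod (fun i _ => norm_nonneg _)
                (fun i _ => norm_le_pi_norm (m (σ i)) i)
          _ = ∏ i, ‖m i‖ := Equiv.prod_comp σ (fun i => ‖m i‖)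
      refine (Finset.sum_le_sum fun σ _ => hterm σ).trans ?_
      rw [Finset.sum_const, Finset.card_univ, Fintype.card_perm, nsmul_eq_mul,
        Fintype.card_fin])

lemma hasDerivAt_det {A : ℝ → Matrix (Fin n) (Fin n) ℝ} {A' : Matrix (Fin n) (Fin n) ℝ}
    {t : ℝ} (hA : HasDerivAt A A' t) :
    HasDerivAt (fun τ => (A τ).det) (∑ i, ((A t).updateRow i (A' i)).det) t := by
  have h1 : HasDerivAt (fun τ => rowsCLM (A τ)) (rowsCLM A') t :=
    rowsCLM.hasFDerivAt.comp_hasDerivAt t hA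
  have h2 := ((detCMM n).hasFDerivAt (x := rowsCLM (A t))).comp_hasDerivAt t h1
  refine h2.congr_deriv ?_
  rw [ContinuousMultilinearMap.linearDeriv_apply]
  rfl

lemma sum_updateRow_det (A A' : Matrix (Fin n) (Fin n) ℝ) (hA : IsUnit A.det) :
    ∑ i, (A.updateRow i (A' i)).det = A.det * (A⁻¹ * A').trace := by
  have h1 : ∀ i, (A.updateRow i (A' i)).det = Matrix.cramer Aᵀ (A' i) i := fun i =>
    (Matrix.cramer_transpose_apply A (A' i) i).symm
  simp only [h1, Matrix.cramer_eq_adjugate_mulVec]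
  rw [Matrix.trace, Finset.mul_sum]
  simp only [Matrix.mulVec, dotProduct, Matrix.diag_apply, Matrix.mul_apply,
    Matrix.transpose_apply, Matrix.inv_def, Matrix.smul_apply, smul_eq_mul]
  rw [Finset.sum_comm]
  refine Finset.sum_congr rfl fun j _ => ?_
  rw [Finset.mul_sum]
  refine Finset.sum_congr rfl fun i _ => ?_
  have h2 : Aᵀ.adjugate i j = A.adjugate j i := by
    rw [← Matrix.adjugate_transpose]; rfl
  rw [h2, ← mul_assoc, ← mul_assoc, Ring.mul_inverse_cancel _ hA, one_mul]

/-! ### Derivative toolkit -/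

lemma hasDerivAt_entry {A : ℝ → Matrix (Fin n) (Fin n) ℝ} {A' : Matrix (Fin n) (Fin n) ℝ} {t : ℝ}
    (hA : HasDerivAt A A' t) (i j : Fin n) :
    HasDerivAt (fun τ => A τ i j) (A' i j) t :=
  (entryCLM i j).hasFDerivAt.comp_hasDerivAt t hA

lemma hasDerivAt_mulVec {M : ℝ → Matrix (Fin n) (Fin n) ℝ} {M' : Matrix (Fin n) (Fin n) ℝ}
    {v : ℝ → Fin n → ℝ} {v' : Fin n → ℝ} {t : ℝ}
    (hM : HasDerivAt M M' t) (hv : HasDerivAt v v' t) :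
    HasDerivAt (fun τ => (M τ).mulVec (v τ)) (M'.mulVec (v t) + (M t).mulVec v') t := by
  rw [hasDerivAt_pi]
  intro i
  have he : ∀ τ, (M τ).mulVec (v τ) i = ∑ j, M τ i j * v τ j := fun τ => rfl
  simp only [he]
  have hsum : HasDerivAt (fun τ => ∑ j, M τ i j * v τ j)
      (∑ j, (M' i j * v t j + M t i j * v' j)) t :=
    HasDerivAt.fun_sum fun j _ =>
      (hasDerivAt_entry hM i j).mul ((hasDerivAt_pi.1 hv) j)
  refine hsum.congr_deriv ?_
  simp [Matrix.mulVec, dotProduct, Finset.sum_add_distrib]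

lemma hasDerivAt_dot {v w : ℝ → Fin n → ℝ} {v' w' : Fin n → ℝ} {t : ℝ}
    (hv : HasDerivAt v v' t) (hw : HasDerivAt w w' t) :
    HasDerivAt (fun τ => v τ ⬝ᵥ w τ) (v' ⬝ᵥ w t + v t ⬝ᵥ w') t := by
  have he : ∀ τ, v τ ⬝ᵥ w τ = ∑ j, v τ j * w τ j := fun τ => rfl
  simp only [he]
  have hsum : HasDerivAt (fun τ => ∑ j, v τ j * w τ j)
      (∑ j, (v' j * w t j + v t j * w' j)) t :=
    HasDerivAt.fun_sum fun j _ => ((hasDerivAt_pi.1 hv) j).mul ((hasDerivAt_pi.1 hw) j)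
  refine hsum.congr_deriv ?_
  simp [dotProduct, Finset.sum_add_distrib]

lemma hasDerivAt_matinv {A : ℝ → Matrix (Fin n) (Fin n) ℝ} {A' : Matrix (Fin n) (Fin n) ℝ} {t : ℝ}
    (hA : HasDerivAt A A' t) (hu : IsUnit (A t)) :
    HasDerivAt (fun τ => (A τ)⁻¹) (-((A t)⁻¹ * A' * (A t)⁻¹)) t := by
  obtain ⟨u, hu⟩ := hu
  have hinv := hasFDerivAt_ringInverse (𝕜 := ℝ) u
  rw [hu] at hinv
  have h := hinv.comp_hasDerivAt t hA
  simp only [Function.comp_def] at h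
  have he : (fun τ => (A τ)⁻¹) = fun τ => Ring.inverse (A τ) := by
    funext τ; exact Matrix.nonsing_inv_eq_ringInverse _
  rw [he]
  refine h.congr_deriv ?_
  simp only [ContinuousLinearMap.neg_apply, ContinuousLinearMap.mulLeftRight_apply]
  rw [← hu, Matrix.coe_units_inv, hu]

lemma hasDerivAt_expD (t : ℝ) :
    HasDerivAt (fun τ : ℝ => NormedSpace.exp (-(τ • Bᵀ)))
      (-(Bᵀ * NormedSpace.exp (-(t • Bᵀ)))) t := by
  have h := hasDerivAt_exp_smul_const' (𝕂 := ℝ) (-Bᵀ) t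
  simp only [smul_neg] at h
  refine h.congr_deriv ?_
  rw [neg_mul]
  rfl

/-! ### dot product symmetry lemmas -/

lemma dot_symm (S : Matrix (Fin n) (Fin n) ℝ) (hS : Sᵀ = S) (a b : Fin n → ℝ) :
    S.mulVec a ⬝ᵥ b = a ⬝ᵥ S.mulVec b := by
  nth_rewrite 1 [← hS]
  rw [Matrix.mulVec_transpose, ← Matrix.dotProduct_mulVec]

lemma dot_conj (Z W : Matrix (Fin n) (Fin n) ℝ) (w : Fin n → ℝ) :
    ((Zᵀ * W * Z).mulVec w) ⬝ᵥ w = (W.mulVec (Z.mulVec w)) ⬝ᵥ (Z.mulVec w) := by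
  rw [show Zᵀ * W * Z = Zᵀ * (W * Z) from by rw [mul_assoc], ← Matrix.mulVec_mulVec]
  rw [Matrix.mulVec_transpose, ← Matrix.dotProduct_mulVec, ← Matrix.mulVec_mulVec]

end MehlerAux

theorem mehlerK_deriv {n : ℕ} (Q B : Matrix (Fin n) (Fin n) ℝ)
    (hQsymm : Q.IsSymm) (hQpos : Q.PosDef) (hB : eigenvaluesNegRe B)
    (x u : Fin n → ℝ) (t : ℝ) (ht : 0 < t) :
    HasDerivAt (fun τ => mehlerK Q B τ x u) (mehlerK Q B t x u * N0 Q B t x u) t := by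
  classical
  by_cases hc : 0 < (Qinf Q B).det
  · -- main case
    have hCdet : IsUnit (Qinf Q B).det := isUnit_iff_ne_zero.2 (ne_of_gt hc)
    have hCsymm : (Qinf Q B)ᵀ = Qinf Q B := MehlerAux.Qinf_isSymm Q B hQsymm
    have hQtpos := MehlerAux.Qmat_posDef Q B hQsymm hQpos ht
    have hdt : 0 < (Qmat Q B t).det := hQtpos.det_pos
    have hQtdet : IsUnit (Qmat Q B t).det := isUnit_iff_ne_zero.2 (ne_of_gt hdt)
    have hQtu : IsUnit (Qmat Q B t) := (Matrix.isUnit_iff_isUnit_det _).2 hQtdet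
    have hQtsymm : (Qmat Q B t)ᵀ = Qmat Q B t := MehlerAux.Qmat_isSymm Q B hQsymm t
    have hQtisymm : ((Qmat Q B t)⁻¹)ᵀ = (Qmat Q B t)⁻¹ := by
      rw [Matrix.transpose_nonsing_inv, hQtsymm]
    have hCisymm : ((Qinf Q B)⁻¹)ᵀ = (Qinf Q B)⁻¹ := by
      rw [Matrix.transpose_nonsing_inv, hCsymm]
    -- abbreviations (only as plain terms)
    -- derivative of Qmat
    have hQd : HasDerivAt (fun τ => Qmat Q B τ)
        (NormedSpace.exp (t • B) * Q * (NormedSpace.exp (t • B))ᵀ) t :=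
      MehlerAux.hasDerivAt_Q Q B t
    -- derivative of det
    have hdet : HasDerivAt (fun τ => (Qmat Q B τ).det)
        ((Qmat Q B t).det * ((Qmat Q B t)⁻¹ *
          (NormedSpace.exp (t • B) * Q * (NormedSpace.exp (t • B))ᵀ)).trace) t := by
      have h := MehlerAux.hasDerivAt_det hQd
      rwa [MehlerAux.sum_updateRow_det _ _ hQtdet] at h
    -- derivative of inverse
    have hinv : HasDerivAt (fun τ => (Qmat Q B τ)⁻¹)
        (-((Qmat Q B t)⁻¹ * (NormedSpace.exp (t • B) * Q * (NormedSpace.exp (t • B))ᵀ) *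
          (Qmat Q B t)⁻¹)) t := MehlerAux.hasDerivAt_matinv hQd hQtu
    have hM : HasDerivAt (fun τ => (Qmat Q B τ)⁻¹ - (Qinf Q B)⁻¹)
        (-((Qmat Q B t)⁻¹ * (NormedSpace.exp (t • B) * Q * (NormedSpace.exp (t • B))ᵀ) *
          (Qmat Q B t)⁻¹)) t := hinv.sub_const _
    -- derivative of Dmat
    have hDd : HasDerivAt (fun τ => Dmat Q B τ)
        (-(Qinf Q B * Bᵀ * (Qinf Q B)⁻¹ * Dmat Q B t)) t := by
      have h1 := ((MehlerAux.hasDerivAt_expD B t).const_mul (Qinf Q B)).mul_const (Qinf Q B)⁻¹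
      refine h1.congr_deriv (Eq.symm ?_)
      show -(Qinf Q B * Bᵀ * (Qinf Q B)⁻¹ *
          (Qinf Q B * NormedSpace.exp (-(t • Bᵀ)) * (Qinf Q B)⁻¹))
        = Qinf Q B * -(Bᵀ * NormedSpace.exp (-(t • Bᵀ))) * (Qinf Q B)⁻¹
      have hCinvC : (Qinf Q B)⁻¹ * Qinf Q B = 1 := Matrix.nonsing_inv_mul _ hCdet
      simp only [mul_neg, neg_mul, neg_inj, mul_assoc]
      rw [← mul_assoc ((Qinf Q B)⁻¹) (Qinf Q B), hCinvC, one_mul]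
    -- derivative of w
    have hwv : HasDerivAt (fun τ => (Dmat Q B τ).mulVec x)
        ((-(Qinf Q B * Bᵀ * (Qinf Q B)⁻¹ * Dmat Q B t)).mulVec x) t :=
      (MehlerAux.mulVecCLM x).hasFDerivAt.comp_hasDerivAt t hDd
    have hwd : HasDerivAt (fun τ => u - (Dmat Q B τ).mulVec x)
        ((Qinf Q B * Bᵀ * (Qinf Q B)⁻¹ * Dmat Q B t).mulVec x) t := by
      have h := hwv.const_sub u
      rwa [Matrix.neg_mulVec, neg_neg] at h
    -- derivative of the quadratic form q
    have hq : HasDerivAt (fun τ => ((Qmat Q B τ)⁻¹ - (Qinf Q B)⁻¹).mulVec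
          (u - (Dmat Q B τ).mulVec x) ⬝ᵥ (u - (Dmat Q B τ).mulVec x))
        (((-((Qmat Q B t)⁻¹ * (NormedSpace.exp (t • B) * Q * (NormedSpace.exp (t • B))ᵀ) *
            (Qmat Q B t)⁻¹)).mulVec (u - (Dmat Q B t).mulVec x) +
          ((Qmat Q B t)⁻¹ - (Qinf Q B)⁻¹).mulVec
            ((Qinf Q B * Bᵀ * (Qinf Q B)⁻¹ * Dmat Q B t).mulVec x)) ⬝ᵥ
            (u - (Dmat Q B t).mulVec x) +
          ((Qmat Q B t)⁻¹ - (Qinf Q B)⁻¹).mulVec (u - (Dmat Q B t).mulVec x) ⬝ᵥ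
            ((Qinf Q B * Bᵀ * (Qinf Q B)⁻¹ * Dmat Q B t).mulVec x)) t :=
      MehlerAux.hasDerivAt_dot (MehlerAux.hasDerivAt_mulVec hM hwd) hwd
    -- derivative of sqrt factor
    have hsq : HasDerivAt (fun τ => Real.sqrt ((Qinf Q B).det / (Qmat Q B τ).det))
        (Real.sqrt ((Qinf Q B).det / (Qmat Q B t).det) * (-(1/2) *
          ((Qmat Q B t)⁻¹ *
            (NormedSpace.exp (t • B) * Q * (NormedSpace.exp (t • B))ᵀ)).trace)) t := by
      have hdiv : HasDerivAt (fun τ => (Qinf Q B).det / (Qmat Q B τ).det)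
          ((0 * (Qmat Q B t).det - (Qinf Q B).det * ((Qmat Q B t).det *
            ((Qmat Q B t)⁻¹ *
              (NormedSpace.exp (t • B) * Q * (NormedSpace.exp (t • B))ᵀ)).trace)) /
            (Qmat Q B t).det ^ 2) t :=
        (hasDerivAt_const t _).div hdet (ne_of_gt hdt)
      have hpos : 0 < (Qinf Q B).det / (Qmat Q B t).det := div_pos hc hdt
      have hsqrt := (Real.hasDerivAt_sqrt (ne_of_gt hpos)).comp t hdiv
      refine hsqrt.congr_deriv (Eq.symm ?_)
      have hs : 0 < Real.sqrt ((Qinf Q B).det / (Qmat Q B t).det) := Real.sqrt_pos.2 hpos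
      have hs2 : Real.sqrt ((Qinf Q B).det / (Qmat Q B t).det) ^ 2
          = (Qinf Q B).det / (Qmat Q B t).det := Real.sq_sqrt hpos.le
      set s := Real.sqrt ((Qinf Q B).det / (Qmat Q B t).det)
      set dd := (Qmat Q B t).det
      set cc := (Qinf Q B).det
      set T := ((Qmat Q B t)⁻¹ *
        (NormedSpace.exp (t • B) * Q * (NormedSpace.exp (t • B))ᵀ)).trace
      have hs2' : s ^ 2 * dd = cc := by
        field_simp at hs2; linarith [hs2]
      field_simp
      linear_combination (-T) * hs2'
    -- derivative of exp factor
    have hG := (hq.const_mul (-(1/2) : ℝ)).exp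
    have hKd := (hsq.mul_const (Real.exp (Rquad Q B x))).mul hG
    have hfun : (fun τ => mehlerK Q B τ x u)
        = fun τ => Real.sqrt ((Qinf Q B).det / (Qmat Q B τ).det) * Real.exp (Rquad Q B x) *
            Real.exp (-(1/2) * (((Qmat Q B τ)⁻¹ - (Qinf Q B)⁻¹).mulVec
              (u - (Dmat Q B τ).mulVec x) ⬝ᵥ (u - (Dmat Q B τ).mulVec x))) := rfl
    rw [hfun]
    refine hKd.congr_deriv (Eq.symm ?_)
    have hMts : ((Qmat Q B t)⁻¹ - (Qinf Q B)⁻¹)ᵀ = (Qmat Q B t)⁻¹ - (Qinf Q B)⁻¹ := by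
      rw [Matrix.transpose_sub, hQtisymm, hCisymm]
    have hZ : (Qmat Q B t)⁻¹ * (NormedSpace.exp (t • B) * Q * (NormedSpace.exp (t • B))ᵀ) *
        (Qmat Q B t)⁻¹
        = ((NormedSpace.exp (t • B))ᵀ * (Qmat Q B t)⁻¹)ᵀ * Q *
          ((NormedSpace.exp (t • B))ᵀ * (Qmat Q B t)⁻¹) := by
      rw [Matrix.transpose_mul, Matrix.transpose_transpose, hQtisymm]
      noncomm_ring
    have hb : (-((Qmat Q B t)⁻¹ * (NormedSpace.exp (t • B) * Q * (NormedSpace.exp (t • B))ᵀ) *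
          (Qmat Q B t)⁻¹)).mulVec (u - (Dmat Q B t).mulVec x) ⬝ᵥ (u - (Dmat Q B t).mulVec x)
        = -(Q.mulVec ((NormedSpace.exp (t • B))ᵀ.mulVec ((Qmat Q B t)⁻¹.mulVec
              (u - (Dmat Q B t).mulVec x))) ⬝ᵥ
            (NormedSpace.exp (t • B))ᵀ.mulVec ((Qmat Q B t)⁻¹.mulVec
              (u - (Dmat Q B t).mulVec x))) := by
      rw [Matrix.neg_mulVec, neg_dotProduct, neg_inj, hZ, MehlerAux.dot_conj,
        ← Matrix.mulVec_mulVec]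
    have hc1 : ((Qmat Q B t)⁻¹ - (Qinf Q B)⁻¹).mulVec
          ((Qinf Q B * Bᵀ * (Qinf Q B)⁻¹ * Dmat Q B t).mulVec x) ⬝ᵥ
            (u - (Dmat Q B t).mulVec x)
        = (Qinf Q B * Bᵀ * (Qinf Q B)⁻¹).mulVec ((Dmat Q B t).mulVec x) ⬝ᵥ
            ((Qmat Q B t)⁻¹ - (Qinf Q B)⁻¹).mulVec (u - (Dmat Q B t).mulVec x) := by
      rw [MehlerAux.dot_symm _ hMts, Matrix.mulVec_mulVec]
    have hc2 : ((Qmat Q B t)⁻¹ - (Qinf Q B)⁻¹).mulVec (u - (Dmat Q B t).mulVec x) ⬝ᵥ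
          (Qinf Q B * Bᵀ * (Qinf Q B)⁻¹ * Dmat Q B t).mulVec x
        = (Qinf Q B * Bᵀ * (Qinf Q B)⁻¹).mulVec ((Dmat Q B t).mulVec x) ⬝ᵥ
            ((Qmat Q B t)⁻¹ - (Qinf Q B)⁻¹).mulVec (u - (Dmat Q B t).mulVec x) := by
      rw [dotProduct_comm, Matrix.mulVec_mulVec]
    have hT : ((Qmat Q B t)⁻¹ *
          (NormedSpace.exp (t • B) * Q * (NormedSpace.exp (t • B))ᵀ)).trace
        = ((Qmat Q B t)⁻¹ * NormedSpace.exp (t • B) * Q *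
            (NormedSpace.exp (t • B))ᵀ).trace := by
      rw [← mul_assoc, ← mul_assoc]
    show mehlerK Q B t x u * N0 Q B t x u = _
    rw [show mehlerK Q B t x u = Real.sqrt ((Qinf Q B).det / (Qmat Q B t).det) *
        Real.exp (Rquad Q B x) *
        Real.exp (-(1/2) * (((Qmat Q B t)⁻¹ - (Qinf Q B)⁻¹).mulVec
          (u - (Dmat Q B t).mulVec x) ⬝ᵥ (u - (Dmat Q B t).mulVec x))) from rfl]
    rw [show N0 Q B t x u = -(1/2) * ((Qmat Q B t)⁻¹ * NormedSpace.exp (t • B) * Q *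
          (NormedSpace.exp (t • B))ᵀ).trace +
        (1/2) * (Q.mulVec ((NormedSpace.exp (t • B))ᵀ.mulVec
            ((Qmat Q B t)⁻¹.mulVec (u - (Dmat Q B t).mulVec x))) ⬝ᵥ
          (NormedSpace.exp (t • B))ᵀ.mulVec
            ((Qmat Q B t)⁻¹.mulVec (u - (Dmat Q B t).mulVec x))) -
        ((Qinf Q B * Bᵀ * (Qinf Q B)⁻¹).mulVec ((Dmat Q B t).mulVec x) ⬝ᵥ
          ((Qmat Q B t)⁻¹ - (Qinf Q B)⁻¹).mulVec (u - (Dmat Q B t).mulVec x)) from rfl]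
    rw [add_dotProduct, hb, hc1, hc2, hT]
    ring
  · -- degenerate case : the kernel vanishes near t
    have hev : (fun τ => mehlerK Q B τ x u) =ᶠ[nhds t] fun _ => (0:ℝ) := by
      filter_upwards [Ioi_mem_nhds ht] with τ hτ
      have hpos : 0 < (Qmat Q B τ).det := (MehlerAux.Qmat_posDef Q B hQsymm hQpos hτ).det_pos
      have h0 : Real.sqrt ((Qinf Q B).det / (Qmat Q B τ).det) = 0 :=
        Real.sqrt_eq_zero'.2 (div_nonpos_iff.2 (Or.inr ⟨le_of_not_gt hc, hpos.le⟩))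
      show Real.sqrt ((Qinf Q B).det / (Qmat Q B τ).det) * _ * _ = 0
      rw [h0, zero_mul, zero_mul]
    have hK0 : mehlerK Q B t x u = 0 := hev.eq_of_nhds
    rw [hK0, zero_mul]
    exact (hasDerivAt_const t (0:ℝ)).congr_of_eventuallyEq hev
end
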